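/- Let {Z_n} be a nonnegative process adapted to a filtration {F_n} with Z_n ≥ 1 for all n, and suppose there is η ∈ (0,1) and a stopping time T such that E[Z_{n+1} | F_n] ≤ η Z_n on the event {n < T}. Then E[η^{−T} | F₀] ≤ Z₀ in the sense that E[η^{−(n∧T)} Z_{n∧T} | F₀] ≤ Z₀ for all n, and by Fatou's lemma E[η^{−T}] ≤ E[Z₀]. -/

import Mathlib

open Real MeasureTheory Filter

/-- Geometric drift (Foster–Lyapunov) on {n < T} implies the supermartingale
bound E[η^{-(n∧T)} Z_{n∧T} | F₀] ≤ Z₀ and hence E[η^{-T}] ≤ E[Z₀]. -/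
theorem geometric_drift_hitting_time_exponential_moment
    {Ω : Type*} {m0 : MeasurableSpace Ω} {μ : Measure Ω} [IsProbabilityMeasure μ]
    (F : Filtration ℕ m0) (Z : ℕ → Ω → ℝ)
    (hadapted : Adapted F Z) (hint : ∀ n, Integrable (Z n) μ)
    (hZ1 : ∀ n ω, 1 ≤ Z n ω)
    (η : ℝ) (hη0 : 0 < η) (hη1 : η < 1)
    (T : Ω → ℕ) (hT : IsStoppingTime F (fun ω => (T ω : WithTop ℕ)))
    (hdrift : ∀ n : ℕ, ∀ᵐ ω ∂μ, n < T ω → (μ[Z (n + 1)|F n]) ω ≤ η * Z n ω) :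
    (∀ n : ℕ, ∀ᵐ ω ∂μ,
      (μ[fun ω' => η⁻¹ ^ (min n (T ω')) * Z (min n (T ω')) ω'|F 0]) ω ≤ Z 0 ω) ∧
    ∫ ω, η⁻¹ ^ (T ω) ∂μ ≤ ∫ ω, Z 0 ω ∂μ := by
  have hηinv : (1 : ℝ) ≤ η⁻¹ := one_le_inv_iff₀.2 ⟨hη0, hη1.le⟩
  have hηinv0 : (0 : ℝ) ≤ η⁻¹ := le_trans zero_le_one hηinv
  -- the process V n = η⁻¹ ^ n * Z n and its stopped version U
  set V : ℕ → Ω → ℝ := fun n ω => η⁻¹ ^ n * Z n ω with hVdef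
  have hVadapted : Adapted F V := by
    intro n
    exact (hadapted n).const_smul (η⁻¹ ^ n)
  have hVint : ∀ n, Integrable (V n) μ := fun n => (hint n).const_mul _
  set U : ℕ → Ω → ℝ := MeasureTheory.stoppedProcess V (fun ω => (T ω : WithTop ℕ)) with hUdef
  have hUadapted : Adapted F U := (hVadapted.stronglyAdapted.stoppedProcess_of_discrete hT).adapted
  have hUint : ∀ n, Integrable (U n) μ := fun n =>
    integrable_stoppedProcess hT hVint n
  have hUeq : ∀ n ω, U n ω = η⁻¹ ^ (min n (T ω)) * Z (min n (T ω)) ω := fun n ω => by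
    simp only [hUdef, stoppedProcess]
    rcases le_total n (T ω) with h | h
    · rw [min_eq_left h]
      exact congrArg (fun k => V (WithTop.untopA k) ω) (min_eq_left (WithTop.coe_le_coe.2 h))
    · rw [min_eq_right h]
      exact congrArg (fun k => V (WithTop.untopA k) ω) (min_eq_right (WithTop.coe_le_coe.2 h))
  -- one-step supermartingale property of U
  have hstep : ∀ n, (μ[U (n + 1)|F n]) ≤ᵐ[μ] U n := by
    intro n
    have hA : MeasurableSet[F n] {ω | T ω ≤ n} := by simpa using hT n
    have hAceq : {ω | n < T ω} = {ω | T ω ≤ n}ᶜ := by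
      ext ω; simp [not_le]
    have hAc : MeasurableSet[F n] {ω | n < T ω} := by
      rw [hAceq]; exact hA.compl
    have hdecomp : U (n + 1) =
        Set.indicator {ω | T ω ≤ n} (U n) + Set.indicator {ω | n < T ω} (V (n + 1)) := by
      funext ω
      by_cases h : T ω ≤ n
      · have h1 : ω ∈ {ω | T ω ≤ n} := h
        have h2 : ω ∉ {ω | n < T ω} := by simp [not_lt.2 h]
        have hmin : min (n + 1) (T ω) = min n (T ω) := by omega
        simp only [Pi.add_apply, Set.indicator_of_mem h1, Set.indicator_of_notMem h2, add_zero]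
        rw [hUeq, hUeq, hmin]
      · push_neg at h
        have h1 : ω ∉ {ω | T ω ≤ n} := by simp [not_le.2 h]
        have h2 : ω ∈ {ω | n < T ω} := h
        have hmin : min (n + 1) (T ω) = n + 1 := by omega
        simp only [Pi.add_apply, Set.indicator_of_notMem h1, Set.indicator_of_mem h2, zero_add]
        rw [hUeq, hmin]
    -- conditional expectations of the two pieces
    have h1 : μ[Set.indicator {ω | T ω ≤ n} (U n)|F n]
        = Set.indicator {ω | T ω ≤ n} (U n) :=
      condExp_of_stronglyMeasurable (F.le n) ((hUadapted n).indicator hA).stronglyMeasurable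
        ((hUint n).indicator (F.le n _ hA))
    have h2 : μ[Set.indicator {ω | n < T ω} (V (n + 1))|F n]
        =ᵐ[μ] Set.indicator {ω | n < T ω} (μ[V (n + 1)|F n]) :=
      condExp_indicator (hVint (n + 1)) hAc
    have hVsmul : V (n + 1) = (η⁻¹ ^ (n + 1)) • Z (n + 1) := rfl
    have h3 : μ[V (n + 1)|F n] =ᵐ[μ] (η⁻¹ ^ (n + 1)) • μ[Z (n + 1)|F n] := by
      rw [hVsmul]; exact condExp_smul _ _ _
    have hsum : μ[U (n + 1)|F n] =ᵐ[μ]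
        Set.indicator {ω | T ω ≤ n} (U n)
          + Set.indicator {ω | n < T ω} (μ[V (n + 1)|F n]) := by
      rw [hdecomp]
      refine (condExp_add ((hUint n).indicator (F.le n _ hA))
        ((hVint (n + 1)).indicator (F.le n _ hAc)) _).trans ?_
      rw [h1]
      exact EventuallyEq.add (EventuallyEq.refl _ _) h2
    refine hsum.trans_le ?_
    filter_upwards [hdrift n, h3] with ω hdω h3ω
    by_cases h : T ω ≤ n
    · have h2 : ω ∉ {ω | n < T ω} := by simp [not_lt.2 h]
      simp only [Pi.add_apply, Set.indicator_of_mem (show ω ∈ {ω | T ω ≤ n} from h),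
        Set.indicator_of_notMem h2, add_zero, le_refl]
    · push_neg at h
      have h1 : ω ∉ {ω | T ω ≤ n} := by simp [not_le.2 h]
      simp only [Pi.add_apply, Set.indicator_of_notMem h1,
        Set.indicator_of_mem (show ω ∈ {ω | n < T ω} from h), zero_add]
      rw [h3ω]
      have hb : (μ[Z (n + 1)|F n]) ω ≤ η * Z n ω := hdω h
      have : η⁻¹ ^ (n + 1) * (μ[Z (n + 1)|F n]) ω ≤ η⁻¹ ^ (n + 1) * (η * Z n ω) :=
        mul_le_mul_of_nonneg_left hb (pow_nonneg hηinv0 _)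
      calc (η⁻¹ ^ (n + 1) • μ[Z (n + 1)|F n]) ω
          = η⁻¹ ^ (n + 1) * (μ[Z (n + 1)|F n]) ω := rfl
        _ ≤ η⁻¹ ^ (n + 1) * (η * Z n ω) := this
        _ = η⁻¹ ^ n * Z n ω := by
            rw [pow_succ]
            field_simp
        _ = U n ω := by rw [hUeq, min_eq_left h.le]
  -- the main conditional bound by induction
  have hmain : ∀ n, (μ[U n|F 0]) ≤ᵐ[μ] Z 0 := by
    intro n
    induction n with
    | zero =>
      have hU0 : U 0 = Z 0 := by
        funext ω
        rw [hUeq]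
        simp
      rw [hU0, condExp_of_stronglyMeasurable (F.le 0) (hadapted 0).stronglyMeasurable (hint 0)]
    | succ n ih =>
      have htower : μ[U (n + 1)|F 0] =ᵐ[μ] μ[μ[U (n + 1)|F n]|F 0] :=
        (condExp_condExp_of_le (F.mono (Nat.zero_le n)) (F.le n)).symm
      have hmono : μ[μ[U (n + 1)|F n]|F 0] ≤ᵐ[μ] μ[U n|F 0] :=
        condExp_mono integrable_condExp (hUint n) (hstep n)
      filter_upwards [htower, hmono, ih] with ω e1 e2 e3
      rw [e1]; exact e2.trans e3
  refine ⟨fun n => hmain n, ?_⟩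
  -- integral bound for the stopped process
  have hintUn : ∀ n, ∫ ω, U n ω ∂μ ≤ ∫ ω, Z 0 ω ∂μ := by
    intro n
    have h1 : ∫ ω, (μ[U n|F 0]) ω ∂μ = ∫ ω, U n ω ∂μ := integral_condExp (F.le 0)
    rw [← h1]
    exact integral_mono_ae integrable_condExp (hint 0) (hmain n)
  -- measurability of T
  have hTmeas : Measurable T := by
    apply measurable_to_countable'
    intro k
    have : T ⁻¹' {k} = {ω | T ω = k} := rfl
    rw [this]
    exact F.le k _ (by simpa using hT.measurableSet_eq k)
  -- g n ω = η⁻¹ ^ min n (T ω)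
  set g : ℕ → Ω → ℝ := fun n ω => η⁻¹ ^ (min n (T ω)) with hgdef
  have hgmeas : ∀ n, Measurable (g n) := by
    intro n
    exact (measurable_const.pow ((measurable_const.min hTmeas))).comp measurable_id |>.mono
      le_rfl le_rfl |>.comp measurable_id |>.mono le_rfl le_rfl
  have hgnn : ∀ n ω, 0 ≤ g n ω := fun n ω => pow_nonneg hηinv0 _
  have hgint : ∀ n, Integrable (g n) μ := by
    intro n
    refine (integrable_const (η⁻¹ ^ n)).mono' (hgmeas n).aestronglyMeasurable ?_
    filter_upwards with ω
    rw [Real.norm_eq_abs, abs_of_nonneg (hgnn n ω)]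
    exact pow_le_pow_right₀ hηinv (min_le_left _ _)
  have hgleU : ∀ n, ∫ ω, g n ω ∂μ ≤ ∫ ω, U n ω ∂μ := by
    intro n
    refine integral_mono (hgint n) (hUint n) fun ω => ?_
    rw [hUeq]
    calc g n ω = η⁻¹ ^ (min n (T ω)) * 1 := (mul_one _).symm
      _ ≤ η⁻¹ ^ (min n (T ω)) * Z (min n (T ω)) ω :=
          mul_le_mul_of_nonneg_left (hZ1 _ ω) (pow_nonneg hηinv0 _)
  have hZ0nn : (0 : ℝ) ≤ ∫ ω, Z 0 ω ∂μ :=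
    integral_nonneg fun ω => le_trans zero_le_one (hZ1 0 ω)
  have key : ∀ n, ∫⁻ ω, ENNReal.ofReal (g n ω) ∂μ ≤ ENNReal.ofReal (∫ ω, Z 0 ω ∂μ) := by
    intro n
    rw [← ofReal_integral_eq_lintegral_ofReal (hgint n) (Eventually.of_forall (hgnn n))]
    exact ENNReal.ofReal_le_ofReal ((hgleU n).trans (hintUn n))
  have hsup_eq : ∀ ω, ENNReal.ofReal (η⁻¹ ^ (T ω)) = ⨆ n, ENNReal.ofReal (g n ω) := by
    intro ω
    apply le_antisymm
    · refine le_iSup_of_le (T ω) ?_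
      simp [hgdef]
    · refine iSup_le fun n => ENNReal.ofReal_le_ofReal ?_
      exact pow_le_pow_right₀ hηinv (min_le_right _ _)
  have hmonog : Monotone fun n ω => ENNReal.ofReal (g n ω) := by
    intro a b hab ω
    exact ENNReal.ofReal_le_ofReal (pow_le_pow_right₀ hηinv (by omega : min a (T ω) ≤ min b (T ω)))
  have hlin : ∫⁻ ω, ENNReal.ofReal (η⁻¹ ^ (T ω)) ∂μ ≤ ENNReal.ofReal (∫ ω, Z 0 ω ∂μ) := by
    have : (fun ω => ENNReal.ofReal (η⁻¹ ^ (T ω))) = fun ω => ⨆ n, ENNReal.ofReal (g n ω) :=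
      funext hsup_eq
    rw [this, lintegral_iSup (fun n => (hgmeas n).ennreal_ofReal) hmonog]
    exact iSup_le key
  have hTpow_meas : Measurable fun ω => η⁻¹ ^ (T ω) :=
    measurable_const.pow hTmeas
  rw [integral_eq_lintegral_of_nonneg_ae
    (Eventually.of_forall fun ω => pow_nonneg hηinv0 _) hTpow_meas.aestronglyMeasurable]
  calc (∫⁻ ω, ENNReal.ofReal (η⁻¹ ^ (T ω)) ∂μ).toReal
      ≤ (ENNReal.ofReal (∫ ω, Z 0 ω ∂μ)).toReal :=
        ENNReal.toReal_mono ENNReal.ofReal_ne_top hlin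
    _ = ∫ ω, Z 0 ω ∂μ := ENNReal.toReal_ofReal hZ0nn
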